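/- Let G be a simple graph with Laplacian eigenvalues λ_1,...,λ_n, all lying in [0,n), degree sequence d_1,...,d_n, and gap sequence g_k(G) = tr(L(G)^k) − Σ_i d_i(d_i+1)^{k−1} ≥ 0. Then for every positive integer c and every real x ≥ n: Π_{i=1}^n (1 − λ_i/x) ≤ exp(−Σ_{k=1}^c g_k(G)/(k x^k)) · Π_{i=1}^n (1 − (d_i+1)/x)^{d_i/(d_i+1)}. -/

import Mathlib

open Matrix Polynomial BigOperators

/-- Laplacian matrix of a simple graph over ℝ (classical decidability). -/
noncomputable def lap {V : Type*} [Fintype V] [DecidableEq V] (G : SimpleGraph V) :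
    Matrix V V ℝ := by classical exact G.lapMatrix ℝ

/-- `ℓ_k(G) = tr(L(G)^k)`. -/
noncomputable def lapTr {V : Type*} [Fintype V] [DecidableEq V] (G : SimpleGraph V)
    (k : ℕ) : ℝ := ((lap G) ^ k).trace

/-- Degree of a vertex (classical decidability). -/
noncomputable def deg {V : Type*} [Fintype V] (G : SimpleGraph V) (v : V) : ℕ := by
  classical exact G.degree v

/-- A graph is d-regular when every vertex has degree d. -/
def IsReg {V : Type*} [Fintype V] (G : SimpleGraph V) (d : ℕ) : Prop := ∀ v : V, deg G v = d

/-- The sum Σ_i d_i (d_i+1)^(k-1) over the degree sequence. -/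
noncomputable def degSum {V : Type*} [Fintype V] [DecidableEq V] (G : SimpleGraph V)
    (k : ℕ) : ℝ := ∑ i : V, (deg G i : ℝ) * ((deg G i : ℝ) + 1) ^ (k - 1)

/-- Gap sequence g_k(G) = ℓ_k(G) − Σ_i d_i (d_i+1)^(k-1). -/
noncomputable def gap {V : Type*} [Fintype V] [DecidableEq V] (G : SimpleGraph V)
    (k : ℕ) : ℝ := lapTr G k - degSum G k

lemma charmatrix_conj {n : ℕ} (U A V : Matrix (Fin n) (Fin n) ℝ) (h1 : U * V = 1) :
    charmatrix (U * A * V) = U.map C * charmatrix A * V.map C := by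
  have hs : (Matrix.scalar (Fin n)) (X : ℝ[X]) = (X : ℝ[X]) • (1 : Matrix (Fin n) (Fin n) ℝ[X]) := by
    rw [Matrix.scalar_apply, Matrix.smul_eq_diagonal_mul, mul_one]
  simp only [charmatrix, Matrix.sub_mul, Matrix.mul_sub, RingHom.mapMatrix_apply]
  congr 1
  · rw [hs, mul_smul_comm, smul_mul_assoc, mul_one,
      ← Matrix.map_mul, h1, Matrix.map_one _ (map_zero C) (map_one C)]
  · rw [Matrix.map_mul, Matrix.map_mul]

lemma charpoly_conj {n : ℕ} (U A V : Matrix (Fin n) (Fin n) ℝ) (h1 : U * V = 1) :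
    (U * A * V).charpoly = A.charpoly := by
  rw [Matrix.charpoly, charmatrix_conj U A V h1, det_mul, det_mul, mul_comm (U.map C).det,
    mul_assoc, ← det_mul, ← Matrix.map_mul, h1, Matrix.map_one _ (map_zero C) (map_one C),
    det_one, mul_one]
  rfl

lemma trace_pow_eq_sum_pow {n : ℕ} (G : SimpleGraph (Fin n)) (lam : Fin n → ℝ)
    (heig : (lap G).charpoly = ∏ i : Fin n, (X - C (lam i))) (k : ℕ) :
    lapTr G k = ∑ i : Fin n, lam i ^ k := by
  classical
  have hH : (lap G).IsHermitian := by
    rw [Matrix.IsHermitian, Matrix.conjTranspose_eq_transpose_of_trivial]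
    exact SimpleGraph.isSymm_lapMatrix (G := G) ℝ
  set U : Matrix (Fin n) (Fin n) ℝ :=
    (Matrix.IsHermitian.eigenvectorUnitary hH : Matrix (Fin n) (Fin n) ℝ) with hU
  set μ : Fin n → ℝ := hH.eigenvalues with hμ
  have hUV : U * star U = 1 :=
    Matrix.mem_unitaryGroup_iff.mp (Matrix.IsHermitian.eigenvectorUnitary hH).2
  have hVU : star U * U = 1 :=
    Matrix.mem_unitaryGroup_iff'.mp (Matrix.IsHermitian.eigenvectorUnitary hH).2
  have hspec : lap G = U * Matrix.diagonal μ * star U := by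
    have := hH.spectral_theorem
    rwa [RCLike.ofReal_real_eq_id, Function.id_comp] at this
  have hpow : ∀ m : ℕ, (lap G) ^ m = U * (Matrix.diagonal μ) ^ m * star U := by
    intro m
    induction m with
    | zero => simp [hUV]
    | succ m ih =>
        rw [pow_succ, ih, hspec, pow_succ]
        simp only [Matrix.mul_assoc]
        rw [← Matrix.mul_assoc (star U) U, hVU, Matrix.one_mul]
  have htr : lapTr G k = ∑ i : Fin n, μ i ^ k := by
    rw [lapTr, hpow k, Matrix.trace_mul_comm, ← Matrix.mul_assoc, hVU, Matrix.one_mul,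
      Matrix.diagonal_pow, Matrix.trace_diagonal]
    rfl
  have hcpd : (Matrix.diagonal μ).charpoly = ∏ i : Fin n, (X - C (μ i)) := by
    rw [Matrix.charpoly_of_upperTriangular _ (Matrix.blockTriangular_diagonal μ)]
    simp
  have hprod : (∏ i : Fin n, (X - C (lam i))) = ∏ i : Fin n, (X - C (μ i)) := by
    rw [← heig, hspec, charpoly_conj U _ (star U) hUV, hcpd]
  have hms : Multiset.map lam Finset.univ.val = Multiset.map μ Finset.univ.val := by
    have e1 : (∏ i : Fin n, (X - C (lam i)))
        = ((Finset.univ.val.map lam).map fun a => X - C a).prod := by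
      rw [Multiset.map_map]; rfl
    have e2 : (∏ i : Fin n, (X - C (μ i)))
        = ((Finset.univ.val.map μ).map fun a => X - C a).prod := by
      rw [Multiset.map_map]; rfl
    have := congrArg Polynomial.roots (e1 ▸ e2 ▸ hprod)
    rwa [Polynomial.roots_multiset_prod_X_sub_C, Polynomial.roots_multiset_prod_X_sub_C] at this
  have hsum : ∑ i : Fin n, lam i ^ k = ∑ i : Fin n, μ i ^ k := by
    have e1 : ∑ i : Fin n, lam i ^ k = ((Finset.univ.val.map lam).map fun t => t ^ k).sum := by
      rw [Multiset.map_map]; rfl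
    have e2 : ∑ i : Fin n, μ i ^ k = ((Finset.univ.val.map μ).map fun t => t ^ k).sum := by
      rw [Multiset.map_map]; rfl
    rw [e1, e2, hms]
  rw [htr, hsum]

/-- the key analytic inequality. If the Laplacian eigenvalues lam i of G all
lie in [0,n), every degree is at most n−2, and the gap sequence is nonnegative, then for
every positive integer c and every real x ≥ n,
Π_i (1 − lam i / x) ≤ exp(−Σ_{k=1}^c g_k(G)/(k x^k)) · Π_i (1 − (d_i+1)/x)^(d_i/(d_i+1)). -/
theorem stmt19 (n : ℕ) (G : SimpleGraph (Fin n)) (lam : Fin n → ℝ)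
    (heig : (lap G).charpoly = ∏ i : Fin n, (Polynomial.X - Polynomial.C (lam i)))
    (hrange : ∀ i : Fin n, 0 ≤ lam i ∧ lam i < n)
    (hdeg : ∀ i : Fin n, deg G i ≤ n - 2)
    (hgap : ∀ k : ℕ, 1 ≤ k → 0 ≤ gap G k)
    (c : ℕ) (hc : 1 ≤ c) (x : ℝ) (hx : (n : ℝ) ≤ x) :
    ∏ i : Fin n, (1 - lam i / x) ≤
      Real.exp (-(∑ k ∈ Finset.Icc 1 c, gap G k / ((k : ℝ) * x ^ k))) *
        ∏ i : Fin n,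
          (1 - ((deg G i : ℝ) + 1) / x) ^ ((deg G i : ℝ) / ((deg G i : ℝ) + 1)) := by
  classical
  rcases Nat.eq_zero_or_pos n with hn | hn
  · subst hn
    have hgap0 : ∀ k : ℕ, gap G k = 0 := by
      intro k
      simp [gap, lapTr, degSum, Matrix.trace]
    simp [hgap0]
  · have hx0 : (0:ℝ) < x := lt_of_lt_of_le (by exact_mod_cast hn) hx
    -- per-eigenvalue series
    have heigsum : ∀ i : Fin n, HasSum
        (fun m : ℕ => lam i ^ (m+1) / (((m:ℝ)+1) * x ^ (m+1)))
        (-Real.log (1 - lam i / x)) := by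
      intro i
      have ht1 : |lam i / x| < 1 := by
        rw [abs_of_nonneg (div_nonneg (hrange i).1 hx0.le)]
        rw [div_lt_one hx0]
        exact lt_of_lt_of_le (hrange i).2 hx
      have := Real.hasSum_pow_div_log_of_abs_lt_one ht1
      convert this using 2 with m
      rw [div_pow, div_div]
      ring_nf
    -- per-vertex degree series
    have hdegsum : ∀ i : Fin n, HasSum
        (fun m : ℕ => (deg G i : ℝ) * ((deg G i : ℝ) + 1) ^ m / (((m:ℝ)+1) * x ^ (m+1)))
        (-((deg G i : ℝ) / ((deg G i : ℝ) + 1)) * Real.log (1 - ((deg G i : ℝ) + 1) / x)) := by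
      intro i
      rcases Nat.eq_zero_or_pos (deg G i) with hd | hd
      · simp [hd]
      · have h2n : deg G i + 2 ≤ n := by
          have := hdeg i
          omega
        have hdlt : (deg G i : ℝ) + 1 < x := by
          have : ((deg G i : ℝ) + 2) ≤ (n : ℝ) := by exact_mod_cast h2n
          linarith
        have hs1 : |((deg G i : ℝ) + 1) / x| < 1 := by
          rw [abs_of_nonneg (div_nonneg (by positivity) hx0.le), div_lt_one hx0]
          exact hdlt
        have := (Real.hasSum_pow_div_log_of_abs_lt_one hs1).mul_left
          ((deg G i : ℝ) / ((deg G i : ℝ) + 1))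
        have hd1 : ((deg G i : ℝ) + 1) ≠ 0 := by positivity
        convert this using 1
        · rfl
        · funext m
          rw [div_pow]
          field_simp
          ring
        · ring
    set A : ℝ := ∑ i : Fin n, (-Real.log (1 - lam i / x)) with hA
    set B : ℝ := ∑ i : Fin n, (-((deg G i : ℝ) / ((deg G i : ℝ) + 1)) *
      Real.log (1 - ((deg G i : ℝ) + 1) / x)) with hB
    have HT : HasSum (fun m : ℕ => lapTr G (m+1) / (((m:ℝ)+1) * x ^ (m+1))) A := by
      have h := hasSum_sum (fun i (_ : i ∈ Finset.univ) => heigsum i)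
      convert h using 1
      funext m
      rw [trace_pow_eq_sum_pow G lam heig, Finset.sum_div]
    have HD : HasSum (fun m : ℕ => degSum G (m+1) / (((m:ℝ)+1) * x ^ (m+1))) B := by
      have h := hasSum_sum (fun i (_ : i ∈ Finset.univ) => hdegsum i)
      convert h using 1
      funext m
      rw [degSum]
      simp only [Nat.add_sub_cancel]
      rw [Finset.sum_div]
    have HG : HasSum (fun m : ℕ => gap G (m+1) / (((m:ℝ)+1) * x ^ (m+1))) (A - B) := by
      have h := HT.sub HD
      convert h using 1
      · rfl
      funext m
      rw [gap, sub_div]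
    have hterm : ∀ m : ℕ, 0 ≤ gap G (m+1) / (((m:ℝ)+1) * x ^ (m+1)) := fun m =>
      div_nonneg (hgap _ (Nat.le_add_left 1 m)) (by positivity)
    have key : ∑ k ∈ Finset.Icc 1 c, gap G k / ((k:ℝ) * x ^ k) ≤ A - B := by
      have hre : ∑ k ∈ Finset.Icc 1 c, gap G k / ((k:ℝ) * x ^ k)
          = ∑ m ∈ Finset.range c, gap G (m+1) / (((m:ℝ)+1) * x ^ (m+1)) := by
        rw [← Finset.Ico_add_one_right_eq_Icc, Finset.sum_Ico_eq_sum_range]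
        simp only [Nat.add_sub_cancel]
        refine Finset.sum_congr rfl fun m _ => ?_
        rw [add_comm 1 m]
        push_cast
        ring_nf
      rw [hre, ← HG.tsum_eq]
      exact HG.summable.sum_le_tsum (Finset.range c) (fun m _ => hterm m)
    have h1 : ∀ i : Fin n, (0:ℝ) < 1 - lam i / x := by
      intro i
      have hlt : lam i < x := lt_of_lt_of_le (hrange i).2 hx
      have : lam i / x < 1 := (div_lt_one hx0).2 hlt
      linarith
    have hprodL : ∏ i : Fin n, (1 - lam i / x) = Real.exp (-A) := by
      have hAe : -A = ∑ i : Fin n, Real.log (1 - lam i / x) := by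
        simp [hA]
      rw [hAe, Real.exp_sum]
      exact Finset.prod_congr rfl fun i _ => (Real.exp_log (h1 i)).symm
    have hprodR : (∏ i : Fin n, (1 - ((deg G i : ℝ) + 1) / x) ^
        ((deg G i : ℝ) / ((deg G i : ℝ) + 1))) = Real.exp (-B) := by
      have hBe : -B = ∑ i : Fin n,
          ((deg G i : ℝ) / ((deg G i : ℝ) + 1)) * Real.log (1 - ((deg G i : ℝ) + 1) / x) := by
        simp [hB]
      rw [hBe, Real.exp_sum]
      refine Finset.prod_congr rfl fun i _ => ?_
      rcases Nat.eq_zero_or_pos (deg G i) with hd | hd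
      · simp [hd]
      · have h2n : deg G i + 2 ≤ n := by have := hdeg i; omega
        have hdlt : (deg G i : ℝ) + 1 < x := by
          have hc2 : ((deg G i : ℝ) + 2) ≤ (n : ℝ) := by exact_mod_cast h2n
          linarith
        have hpos : (0:ℝ) < 1 - ((deg G i : ℝ) + 1) / x := by
          have : ((deg G i : ℝ) + 1) / x < 1 := (div_lt_one hx0).2 hdlt
          linarith
        rw [Real.rpow_def_of_pos hpos, mul_comm]
    rw [hprodL, hprodR, ← Real.exp_add]
    apply Real.exp_le_exp.2
    linarith [key]
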